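/- Fix β, k, θ > 0. Let (U, V, Y) be independent positive random variables with U ~ Gamma(β+k, θ), V^{-1} ~ Gamma(β, θ), and Y ~ Gamma(k, θ). Define U' = Y + 1/V, V' = (YV + 1)/U, and Y' = UVY/(YV + 1). Then the random vector (U', V', Y') has the same joint distribution as (U, V, Y); in particular U', V', Y' are independent with U' ~ Gamma(β+k, θ), (V')^{-1} ~ Gamma(β, θ), Y' ~ Gamma(k, θ). -/

import Mathlib

open MeasureTheory ProbabilityTheory
open scoped ENNReal NNReal

namespace BetaGammaAux

open Real Set

/-! ### Linear algebra: 3×3 Jacobian matrices as continuous linear maps on `ℝ × ℝ × ℝ` -/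

noncomputable def row (a b c : ℝ) : ℝ × ℝ × ℝ →L[ℝ] ℝ :=
  a • (ContinuousLinearMap.fst ℝ ℝ (ℝ × ℝ))
  + b • ((ContinuousLinearMap.fst ℝ ℝ ℝ).comp (ContinuousLinearMap.snd ℝ ℝ (ℝ × ℝ)))
  + c • ((ContinuousLinearMap.snd ℝ ℝ ℝ).comp (ContinuousLinearMap.snd ℝ ℝ (ℝ × ℝ)))

@[simp] lemma row_apply (a b c : ℝ) (p : ℝ × ℝ × ℝ) :
    row a b c p = a * p.1 + b * p.2.1 + c * p.2.2 := by
  simp [row, smul_eq_mul]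

noncomputable def mk3 (a b c d e f g h i : ℝ) : ℝ × ℝ × ℝ →L[ℝ] ℝ × ℝ × ℝ :=
  (row a b c).prod ((row d e f).prod (row g h i))

@[simp] lemma mk3_apply (a b c d e f g h i : ℝ) (p : ℝ × ℝ × ℝ) :
    mk3 a b c d e f g h i p = (a * p.1 + b * p.2.1 + c * p.2.2,
      d * p.1 + e * p.2.1 + f * p.2.2, g * p.1 + h * p.2.1 + i * p.2.2) := by
  simp [mk3]

noncomputable def eqv : (ℝ × ℝ × ℝ) ≃ₗ[ℝ] (Fin 3 → ℝ) where
  toFun p := ![p.1, p.2.1, p.2.2]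
  invFun f := (f 0, f 1, f 2)
  map_add' p q := by funext i; fin_cases i <;> simp
  map_smul' c p := by funext i; fin_cases i <;> simp
  left_inv p := by simp
  right_inv f := by funext i; fin_cases i <;> simp

noncomputable def bR : Module.Basis (Fin 3) ℝ (ℝ × ℝ × ℝ) := Module.Basis.ofEquivFun eqv

lemma det_mk3 (a b c d e f g h i : ℝ) :
    LinearMap.det ((mk3 a b c d e f g h i : ℝ × ℝ × ℝ →L[ℝ] ℝ × ℝ × ℝ) :
        ℝ × ℝ × ℝ →ₗ[ℝ] ℝ × ℝ × ℝ) =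
      a*e*i - a*f*h - b*d*i + b*f*g + c*d*h - c*e*g := by
  rw [← LinearMap.det_toMatrix bR, Matrix.det_fin_three]
  simp [LinearMap.toMatrix_apply, bR, eqv, Module.Basis.ofEquivFun, mk3, row, smul_eq_mul,
    Matrix.cons_val_zero, Matrix.cons_val_one, Finsupp.linearEquivFunOnFinite_apply]

/-! ### The involution `Ŝ` and its derivative -/

noncomputable def Shat : ℝ × ℝ × ℝ → ℝ × ℝ × ℝ := fun p =>
  (p.2.1 + p.2.2, p.1 * p.2.1 / (p.2.1 + p.2.2), p.1 * p.2.2 / (p.2.1 + p.2.2))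

lemma measurable_Shat : Measurable Shat := by
  apply Measurable.prod
  · exact (measurable_fst.comp measurable_snd).add (measurable_snd.comp measurable_snd)
  · apply Measurable.prod
    · exact (measurable_fst.mul (measurable_fst.comp measurable_snd)).div
        ((measurable_fst.comp measurable_snd).add (measurable_snd.comp measurable_snd))
    · exact (measurable_fst.mul (measurable_snd.comp measurable_snd)).div
        ((measurable_fst.comp measurable_snd).add (measurable_snd.comp measurable_snd))

noncomputable def Sder (p : ℝ × ℝ × ℝ) : ℝ × ℝ × ℝ →L[ℝ] ℝ × ℝ × ℝ :=
  mk3 0 1 1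
    (p.2.1 / (p.2.1 + p.2.2)) (p.1 * p.2.2 / (p.2.1 + p.2.2) ^ 2)
      (-(p.1 * p.2.1) / (p.2.1 + p.2.2) ^ 2)
    (p.2.2 / (p.2.1 + p.2.2)) (-(p.1 * p.2.2) / (p.2.1 + p.2.2) ^ 2)
      (p.1 * p.2.1 / (p.2.1 + p.2.2) ^ 2)

lemma hasFDerivAt_Shat {p : ℝ × ℝ × ℝ} (hs : p.2.1 + p.2.2 ≠ 0) :
    HasFDerivAt Shat (Sder p) p := by
  have hdiv : ∀ (a b : ℝ), a / b = a * b⁻¹ := fun a b => div_eq_mul_inv a b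
  obtain ⟨u, w, y⟩ := p
  simp only [Prod.fst, Prod.snd] at hs
  have h1 : HasFDerivAt (fun q : ℝ × ℝ × ℝ => q.2.1 + q.2.2)
      (((ContinuousLinearMap.fst ℝ ℝ ℝ).comp (ContinuousLinearMap.snd ℝ ℝ (ℝ × ℝ))) +
        ((ContinuousLinearMap.snd ℝ ℝ ℝ).comp (ContinuousLinearMap.snd ℝ ℝ (ℝ × ℝ)))) (u, w, y) :=
    ((hasFDerivAt_fst.comp _ hasFDerivAt_snd).add (hasFDerivAt_snd.comp _ hasFDerivAt_snd))
  have h21 : HasFDerivAt (fun q : ℝ × ℝ × ℝ => q.2.1)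
      ((ContinuousLinearMap.fst ℝ ℝ ℝ).comp (ContinuousLinearMap.snd ℝ ℝ (ℝ × ℝ))) (u, w, y) :=
    hasFDerivAt_fst.comp _ hasFDerivAt_snd
  have h22 : HasFDerivAt (fun q : ℝ × ℝ × ℝ => q.2.2)
      ((ContinuousLinearMap.snd ℝ ℝ ℝ).comp (ContinuousLinearMap.snd ℝ ℝ (ℝ × ℝ))) (u, w, y) :=
    hasFDerivAt_snd.comp _ hasFDerivAt_snd
  have hinv := (hasFDerivAt_inv' (𝕜 := ℝ) (R := ℝ) hs).comp (x := ((u,w,y) : ℝ × ℝ × ℝ)) h1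
  have h2 := (hasFDerivAt_fst.mul h21).mul hinv
  have h3 := (hasFDerivAt_fst.mul h22).mul hinv
  have hr1 := h1.congr_fderiv (g' := row 0 1 1) ?e1
  have hr2 := h2.congr_fderiv
    (g' := row (w / (w + y)) (u * y / (w + y) ^ 2) (-(u * w) / (w + y) ^ 2)) ?e2
  have hr3 := h3.congr_fderiv
    (g' := row (y / (w + y)) (-(u * y) / (w + y) ^ 2) (u * w / (w + y) ^ 2)) ?e3
  · have := HasFDerivAt.prodMk hr1 (HasFDerivAt.prodMk hr2 hr3)
    simp only [Shat, Sder, hdiv] at this ⊢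
    exact this
  case e1 =>
    refine ContinuousLinearMap.ext fun q => ?_
    simp [smul_eq_mul]
  case e2 =>
    refine ContinuousLinearMap.ext fun q => ?_
    simp [smul_eq_mul, ContinuousLinearMap.mulLeftRight_apply]
    field_simp
    ring
  case e3 =>
    refine ContinuousLinearMap.ext fun q => ?_
    simp [smul_eq_mul, ContinuousLinearMap.mulLeftRight_apply]
    field_simp
    ring

/-! ### The positive octant -/

def Omega0 : Set (ℝ × ℝ × ℝ) := {p | 0 < p.1 ∧ 0 < p.2.1 ∧ 0 < p.2.2}

lemma measurableSet_Omega0 : MeasurableSet Omega0 := by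
  have : Omega0 = {p : ℝ × ℝ × ℝ | 0 < p.1} ∩ ({p : ℝ × ℝ × ℝ | 0 < p.2.1} ∩
      {p : ℝ × ℝ × ℝ | 0 < p.2.2}) := by
    ext p; simp [Omega0, and_assoc]
  rw [this]
  exact (measurableSet_lt measurable_const measurable_fst).inter
    ((measurableSet_lt measurable_const (measurable_fst.comp measurable_snd)).inter
      (measurableSet_lt measurable_const (measurable_snd.comp measurable_snd)))

lemma Shat_mem {p : ℝ × ℝ × ℝ} (hp : p ∈ Omega0) : Shat p ∈ Omega0 := by
  obtain ⟨u, w, y⟩ := p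
  obtain ⟨hu, hw, hy⟩ := hp
  simp only [Omega0, Shat, Set.mem_setOf_eq] at *
  refine ⟨by linarith, by positivity, by positivity⟩

lemma Shat_Shat {p : ℝ × ℝ × ℝ} (hp : p ∈ Omega0) : Shat (Shat p) = p := by
  obtain ⟨u, w, y⟩ := p
  obtain ⟨hu, hw, hy⟩ := hp
  have hs : w + y ≠ 0 := by positivity
  have hu' : u ≠ 0 := ne_of_gt hu
  simp only [Shat]
  refine Prod.ext ?_ (Prod.ext ?_ ?_) <;> field_simp <;> ring

lemma Shat_injOn : Set.InjOn Shat Omega0 := fun a ha b hb h => by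
  rw [← Shat_Shat ha, ← Shat_Shat hb, h]

lemma Shat_image : Shat '' Omega0 = Omega0 := by
  refine subset_antisymm (Set.image_subset_iff.mpr fun p hp => Shat_mem hp) fun p hp => ?_
  exact ⟨Shat p, Shat_mem hp, Shat_Shat hp⟩

lemma det_Sder {p : ℝ × ℝ × ℝ} (hp : p ∈ Omega0) :
    (Sder p).det = -(p.1 / (p.2.1 + p.2.2)) := by
  obtain ⟨u, w, y⟩ := p
  obtain ⟨hu, hw, hy⟩ := hp
  have hs : (w : ℝ) + y ≠ 0 := by positivity
  simp only [Sder]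
  rw [ContinuousLinearMap.det, det_mk3]
  field_simp
  ring

/-! ### Product of densities -/

lemma prod_withDensity {α β : Type*} [MeasurableSpace α] [MeasurableSpace β]
    (μ : Measure α) (ν : Measure β) [SFinite μ] [SFinite ν]
    (f : α → ℝ≥0∞) (g : β → ℝ≥0∞) (hf : Measurable f) (hg : Measurable g)
    [_hf : SigmaFinite (μ.withDensity f)] [_hg : SigmaFinite (ν.withDensity g)] :
    (μ.withDensity f).prod (ν.withDensity g)
      = (μ.prod ν).withDensity (fun p => f p.1 * g p.2) := by
  refine Measure.prod_eq fun s t hs ht => ?_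
  rw [withDensity_apply _ (hs.prod ht), ← Measure.prod_restrict,
    lintegral_prod_mul hf.aemeasurable hg.aemeasurable,
    withDensity_apply _ hs, withDensity_apply _ ht]

lemma gammaMeasure_Iic_zero {a r : ℝ} : gammaMeasure a r (Iic 0) = 0 := by
  rw [gammaMeasure, withDensity_apply _ measurableSet_Iic,
    Measure.restrict_congr_set (Iio_ae_eq_Iic (a := (0:ℝ))).symm]
  exact lintegral_gammaPDF_of_nonpos le_rfl

/-! ### The key density identity -/

lemma key_real {β k r : ℝ} (hβ : 0 < β) (hk : 0 < k) (hr : 0 < r)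
    {u w y : ℝ} (hu : 0 < u) (hw : 0 < w) (hy : 0 < y) :
    u / (w + y) * (gammaPDFReal (β + k) r (w + y) *
      (gammaPDFReal β r (u * w / (w + y)) * gammaPDFReal k r (u * y / (w + y)))) =
    gammaPDFReal (β + k) r u * (gammaPDFReal β r w * gammaPDFReal k r y) := by
  have hs : (0:ℝ) < w + y := by linarith
  have hs0 : (w + y) ≠ 0 := ne_of_gt hs
  unfold ProbabilityTheory.gammaPDFReal
  rw [if_pos hs.le, if_pos hu.le, if_pos hw.le, if_pos hy.le,
    if_pos (by positivity : (0:ℝ) ≤ u * w / (w + y)),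
    if_pos (by positivity : (0:ℝ) ≤ u * y / (w + y))]
  rw [div_rpow (by positivity) hs.le, div_rpow (by positivity) hs.le,
    mul_rpow hu.le hw.le, mul_rpow hu.le hy.le]
  have hE : exp (-(r * (w + y))) * (exp (-(r * (u * w / (w + y)))) *
      exp (-(r * (u * y / (w + y))))) = exp (-(r * u)) * (exp (-(r * w)) * exp (-(r * y))) := by
    rw [← exp_add, ← exp_add, ← exp_add, ← exp_add]
    congr 1
    field_simp
    ring
  have hU : u ^ (β - 1) * u ^ (k - 1) * u = u ^ (β + k - 1) := by
    nth_rewrite 3 [← Real.rpow_one u]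
    rw [← Real.rpow_add hu, ← Real.rpow_add hu]
    congr 1
    ring
  have hS : (w + y) ^ (β - 1) * (w + y) ^ (k - 1) * (w + y) = (w + y) ^ (β + k - 1) := by
    nth_rewrite 3 [← Real.rpow_one (w + y)]
    rw [← Real.rpow_add hs, ← Real.rpow_add hs]
    congr 1
    ring
  have hsb : ((w + y) : ℝ) ^ (β - 1) ≠ 0 := by positivity
  have hsk : ((w + y) : ℝ) ^ (k - 1) ≠ 0 := by positivity
  calc u / (w + y) * (r ^ (β + k) / Gamma (β + k) * (w + y) ^ (β + k - 1) * exp (-(r * (w + y))) *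
        (r ^ β / Gamma β * (u ^ (β - 1) * w ^ (β - 1) / (w + y) ^ (β - 1)) *
            exp (-(r * (u * w / (w + y)))) *
          (r ^ k / Gamma k * (u ^ (k - 1) * y ^ (k - 1) / (w + y) ^ (k - 1)) *
            exp (-(r * (u * y / (w + y)))))))
      = (r ^ (β + k) / Gamma (β + k) * (r ^ β / Gamma β) * (r ^ k / Gamma k)
          * (w ^ (β - 1) * y ^ (k - 1)))
        * ((u ^ (β - 1) * u ^ (k - 1) * u)
          * ((w + y) ^ (β + k - 1) / ((w + y) ^ (β - 1) * (w + y) ^ (k - 1) * (w + y))))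
        * (exp (-(r * (w + y))) * (exp (-(r * (u * w / (w + y)))) *
            exp (-(r * (u * y / (w + y)))))) := by
        field_simp
    _ = (r ^ (β + k) / Gamma (β + k) * (r ^ β / Gamma β) * (r ^ k / Gamma k)
          * (w ^ (β - 1) * y ^ (k - 1)))
        * (u ^ (β + k - 1) * 1)
        * (exp (-(r * u)) * (exp (-(r * w)) * exp (-(r * y)))) := by
        rw [hE, hU, hS, div_self (by positivity)]
    _ = r ^ (β + k) / Gamma (β + k) * u ^ (β + k - 1) * exp (-(r * u)) *
        (r ^ β / Gamma β * w ^ (β - 1) * exp (-(r * w)) *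
          (r ^ k / Gamma k * y ^ (k - 1) * exp (-(r * y)))) := by ring

end BetaGammaAux

open BetaGammaAux Real Set

/-! ### The core invariance of the product gamma measure under `Ŝ` -/

section Core

variable {β k r : ℝ}

lemma nu_compl_Omega0 (hβ : 0 < β) (hk : 0 < k) (hr : 0 < r) :
    ((gammaMeasure (β + k) r).prod ((gammaMeasure β r).prod (gammaMeasure k r))) Omega0ᶜ = 0 := by
  haveI := isProbabilityMeasure_gammaMeasure (by linarith : (0:ℝ) < β + k) hr
  haveI := isProbabilityMeasure_gammaMeasure hβ hr
  haveI := isProbabilityMeasure_gammaMeasure hk hr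
  have hsub : Omega0ᶜ ⊆ (Iic 0 ×ˢ (univ : Set (ℝ × ℝ))) ∪
      ((univ : Set ℝ) ×ˢ (Iic 0 ×ˢ (univ : Set ℝ)) ∪
        (univ : Set ℝ) ×ˢ ((univ : Set ℝ) ×ˢ Iic 0)) := by
    intro p hp
    simp only [Omega0, mem_compl_iff, mem_setOf_eq, not_and_or, not_lt] at hp
    rcases hp with h | h | h
    · exact Or.inl (by simp [h])
    · exact Or.inr (Or.inl (by simp [h]))
    · exact Or.inr (Or.inr (by simp [h]))
  refine le_antisymm ?_ zero_le
  have h1 : ((gammaMeasure (β + k) r).prod ((gammaMeasure β r).prod (gammaMeasure k r)))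
      (Iic 0 ×ˢ (univ : Set (ℝ × ℝ))) = 0 := by
    rw [Measure.prod_prod, gammaMeasure_Iic_zero, zero_mul]
  have h2 : ((gammaMeasure (β + k) r).prod ((gammaMeasure β r).prod (gammaMeasure k r)))
      ((univ : Set ℝ) ×ˢ (Iic 0 ×ˢ (univ : Set ℝ))) = 0 := by
    rw [Measure.prod_prod, Measure.prod_prod, gammaMeasure_Iic_zero, zero_mul, mul_zero]
  have h3 : ((gammaMeasure (β + k) r).prod ((gammaMeasure β r).prod (gammaMeasure k r)))
      ((univ : Set ℝ) ×ˢ ((univ : Set ℝ) ×ˢ Iic 0)) = 0 := by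
    rw [Measure.prod_prod, Measure.prod_prod, gammaMeasure_Iic_zero, mul_zero, mul_zero]
  refine (measure_mono hsub).trans ?_
  refine (measure_union_le _ _).trans ?_
  rw [h1, zero_add]
  refine (measure_union_le _ _).trans ?_
  rw [h2, h3, add_zero]

lemma nu_eq_withDensity (hβ : 0 < β) (hk : 0 < k) (hr : 0 < r) :
    (gammaMeasure (β + k) r).prod ((gammaMeasure β r).prod (gammaMeasure k r)) =
      (((volume : Measure ℝ).prod ((volume : Measure ℝ).prod (volume : Measure ℝ))).withDensity
        (fun p => gammaPDF (β + k) r p.1 * (gammaPDF β r p.2.1 * gammaPDF k r p.2.2))) := by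
  haveI h1 := isProbabilityMeasure_gammaMeasure (by linarith : (0:ℝ) < β + k) hr
  haveI h2 := isProbabilityMeasure_gammaMeasure hβ hr
  haveI h3 := isProbabilityMeasure_gammaMeasure hk hr
  have hm : ∀ a : ℝ, Measurable (gammaPDF a r) := fun a =>
    (measurable_gammaPDFReal a r).ennreal_ofReal
  have hinner : (gammaMeasure β r).prod (gammaMeasure k r) =
      ((volume : Measure ℝ).prod (volume : Measure ℝ)).withDensity
        (fun p => gammaPDF β r p.1 * gammaPDF k r p.2) :=
    prod_withDensity (volume : Measure ℝ) (volume : Measure ℝ)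
      (gammaPDF β r) (gammaPDF k r) (hm _) (hm _)
      (_hf := by exact (by infer_instance : SigmaFinite (gammaMeasure β r)))
      (_hg := by exact (by infer_instance : SigmaFinite (gammaMeasure k r)))
  rw [hinner]
  exact prod_withDensity (volume : Measure ℝ) ((volume : Measure ℝ).prod (volume : Measure ℝ))
    (gammaPDF (β + k) r) (fun p => gammaPDF β r p.1 * gammaPDF k r p.2) (hm _)
    (((hm β).comp measurable_fst).mul ((hm k).comp measurable_snd))
    (_hf := by exact (by infer_instance : SigmaFinite (gammaMeasure (β + k) r)))
    (_hg := by rw [← hinner]; infer_instance)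

lemma key_ennreal (hβ : 0 < β) (hk : 0 < k) (hr : 0 < r) {p : ℝ × ℝ × ℝ} (hp : p ∈ Omega0) :
    ENNReal.ofReal |(Sder p).det| *
      (gammaPDF (β + k) r (Shat p).1 *
        (gammaPDF β r (Shat p).2.1 * gammaPDF k r (Shat p).2.2)) =
    gammaPDF (β + k) r p.1 * (gammaPDF β r p.2.1 * gammaPDF k r p.2.2) := by
  have hdet := det_Sder hp
  obtain ⟨u, w, y⟩ := p
  obtain ⟨hu, hw, hy⟩ := hp
  have hs : (0:ℝ) < w + y := by linarith
  rw [hdet]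
  simp only [Shat, gammaPDF]
  rw [abs_neg, abs_of_pos (by positivity)]
  rw [← ENNReal.ofReal_mul (gammaPDFReal_nonneg hβ hr _),
    ← ENNReal.ofReal_mul (gammaPDFReal_nonneg (by linarith : (0:ℝ) < β + k) hr _),
    ← ENNReal.ofReal_mul (by positivity),
    ← ENNReal.ofReal_mul (gammaPDFReal_nonneg hβ hr _),
    ← ENNReal.ofReal_mul (gammaPDFReal_nonneg (by linarith : (0:ℝ) < β + k) hr _)]
  refine congrArg ENNReal.ofReal ?_
  have hkey := key_real hβ hk hr hu hw hy
  linear_combination hkey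

lemma core_invariance (hβ : 0 < β) (hk : 0 < k) (hr : 0 < r) :
    ((gammaMeasure (β + k) r).prod ((gammaMeasure β r).prod (gammaMeasure k r))).map Shat =
      (gammaMeasure (β + k) r).prod ((gammaMeasure β r).prod (gammaMeasure k r)) := by
  haveI := isProbabilityMeasure_gammaMeasure (by linarith : (0:ℝ) < β + k) hr
  haveI := isProbabilityMeasure_gammaMeasure hβ hr
  haveI := isProbabilityMeasure_gammaMeasure hk hr
  set ν := (gammaMeasure (β + k) r).prod ((gammaMeasure β r).prod (gammaMeasure k r)) with hν
  set vol3 := ((volume : Measure ℝ).prod ((volume : Measure ℝ).prod (volume : Measure ℝ)))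
    with hvol3
  set F : ℝ × ℝ × ℝ → ℝ≥0∞ :=
    fun p => gammaPDF (β + k) r p.1 * (gammaPDF β r p.2.1 * gammaPDF k r p.2.2) with hF
  have hFmeas : Measurable F := by
    have hm : ∀ a : ℝ, Measurable (gammaPDF a r) := fun a =>
      (measurable_gammaPDFReal a r).ennreal_ofReal
    exact ((hm _).comp measurable_fst).mul
      (((hm _).comp (measurable_fst.comp measurable_snd)).mul
        ((hm _).comp (measurable_snd.comp measurable_snd)))
  have hνF : ν = vol3.withDensity F := nu_eq_withDensity hβ hk hr
  have hnull : ν Omega0ᶜ = 0 := nu_compl_Omega0 hβ hk hr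
  have hderiv : ∀ x ∈ Omega0, HasFDerivWithinAt Shat (Sder x) Omega0 x := fun x hx =>
    (hasFDerivAt_Shat (by obtain ⟨h1, h2, h3⟩ := hx; positivity)).hasFDerivWithinAt
  ext A hA
  rw [Measure.map_apply measurable_Shat hA]
  have hSA : MeasurableSet (Shat ⁻¹' A) := measurable_Shat hA
  haveI : ((volume : Measure ℝ).prod (volume : Measure ℝ)).IsAddHaarMeasure :=
    Measure.prod.instIsAddHaarMeasure _ _
  haveI : vol3.IsAddHaarMeasure := Measure.prod.instIsAddHaarMeasure _ _
  have key := lintegral_image_eq_lintegral_abs_det_fderiv_mul vol3 measurableSet_Omega0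
    hderiv Shat_injOn (A.indicator F)
  rw [Shat_image] at key
  have hLHS : ν (Shat ⁻¹' A) = ∫⁻ x in Omega0, ENNReal.ofReal |(Sder x).det| *
      A.indicator F (Shat x) ∂vol3 := by
    rw [← measure_inter_conull (s := Shat ⁻¹' A) hnull, hνF,
      withDensity_apply _ (hSA.inter measurableSet_Omega0),
      ← Measure.restrict_restrict hSA, ← lintegral_indicator hSA]
    refine setLIntegral_congr_fun measurableSet_Omega0 (fun x hx => ?_)
    by_cases hxA : Shat x ∈ A
    · rw [Set.indicator_of_mem hxA, Set.indicator_of_mem (by exact hxA : x ∈ Shat ⁻¹' A),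
        key_ennreal hβ hk hr hx]
    · rw [Set.indicator_of_notMem hxA, Set.indicator_of_notMem
        (by exact hxA : x ∉ Shat ⁻¹' A), mul_zero]
  have hRHS : ∫⁻ x in Omega0, A.indicator F x ∂vol3 = ν A := by
    rw [← measure_inter_conull (s := A) hnull, hνF,
      withDensity_apply _ (hA.inter measurableSet_Omega0),
      ← Measure.restrict_restrict hA, ← lintegral_indicator hA]
  rw [hLHS, ← key, hRHS]

end Core

/-- Beta-gamma algebra invariance: if `U ~ Gamma(β+k,θ)`, `V⁻¹ ~ Gamma(β,θ)`,
`Y ~ Gamma(k,θ)` are independent and positive, then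
`(U', V', Y') = (Y + 1/V, (YV+1)/U, UVY/(YV+1))` has the same joint distribution
as `(U, V, Y)`. -/
theorem betaGamma_invariance
    {Ω : Type*} [MeasurableSpace Ω] (P : Measure Ω) [IsProbabilityMeasure P]
    (β k θ : ℝ) (hβ : 0 < β) (hk : 0 < k) (hθ : 0 < θ)
    (U V Y : Ω → ℝ)
    (hUmeas : Measurable U) (hVmeas : Measurable V) (hYmeas : Measurable Y)
    (hpos : ∀ᵐ ω ∂P, 0 < U ω ∧ 0 < V ω ∧ 0 < Y ω)
    (hindep : iIndepFun ![U, V, Y] P)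
    (hU : P.map U = gammaMeasure (β + k) (1 / θ))
    (hV : P.map (fun ω => (V ω)⁻¹) = gammaMeasure β (1 / θ))
    (hY : P.map Y = gammaMeasure k (1 / θ)) :
    P.map (fun ω =>
        (Y ω + (V ω)⁻¹, (Y ω * V ω + 1) / U ω, U ω * V ω * Y ω / (Y ω * V ω + 1))) =
      P.map (fun ω => (U ω, V ω, Y ω)) := by
  have hr : 0 < 1 / θ := by positivity
  set r := 1 / θ
  haveI := isProbabilityMeasure_gammaMeasure (by linarith : (0:ℝ) < β + k) hr
  haveI := isProbabilityMeasure_gammaMeasure hβ hr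
  haveI := isProbabilityMeasure_gammaMeasure hk hr
  set γ1 := gammaMeasure (β + k) r
  set γ2 := gammaMeasure β r
  set γ3 := gammaMeasure k r
  set ν := γ1.prod (γ2.prod γ3) with hνdef
  -- measurable components of the vector
  have hfm : ∀ i, Measurable (![U, V, Y] i) := by
    intro i
    fin_cases i <;> simpa
  -- independence
  have hVY : IndepFun V Y P := by
    have := hindep.indepFun (i := 1) (j := 2) (by decide)
    simpa using this
  have hUVY : IndepFun U (fun ω => (V ω, Y ω)) P := by
    have := hindep.indepFun_prodMk hfm 1 2 0 (by decide) (by decide)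
    exact (by simpa using this : IndepFun (fun ω => (V ω, Y ω)) U P).symm
  have hmapVY : P.map (fun ω => (V ω, Y ω)) = (P.map V).prod (P.map Y) :=
    (indepFun_iff_map_prod_eq_prod_map_map hVmeas.aemeasurable hYmeas.aemeasurable).mp hVY
  have hjoint : P.map (fun ω => (U ω, V ω, Y ω)) = (P.map U).prod ((P.map V).prod (P.map Y)) := by
    have := (indepFun_iff_map_prod_eq_prod_map_map hUmeas.aemeasurable
      (hVmeas.prodMk hYmeas).aemeasurable).mp hUVY
    rw [this, hmapVY]
  -- the law of V
  have hmapV : P.map V = γ2.map Inv.inv := by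
    rw [← hV, Measure.map_map (f := fun ω => (V ω)⁻¹) measurable_inv hVmeas.inv]
    congr 1
    funext ω
    simp
  -- φ
  set φ : ℝ × ℝ × ℝ → ℝ × ℝ × ℝ := fun p => (p.1, p.2.1⁻¹, p.2.2) with hφ
  have hφmeas : Measurable φ :=
    measurable_fst.prodMk (((measurable_fst.comp measurable_snd).inv).prodMk
      (measurable_snd.comp measurable_snd))
  have hκ : (P.map U).prod ((P.map V).prod (P.map Y)) = ν.map φ := by
    rw [hU, hmapV, hY]
    have h1 : (γ2.map Inv.inv).prod γ3 = (γ2.prod γ3).map (Prod.map Inv.inv id) := by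
      have := Measure.map_prod_map γ2 γ3 measurable_inv (measurable_id : Measurable (id : ℝ → ℝ))
      rwa [Measure.map_id] at this
    have h2 : γ1.prod ((γ2.prod γ3).map (Prod.map Inv.inv id)) =
        (γ1.prod (γ2.prod γ3)).map (Prod.map id (Prod.map Inv.inv id)) := by
      have := Measure.map_prod_map γ1 (γ2.prod γ3) (measurable_id : Measurable (id : ℝ → ℝ))
        (measurable_inv.prodMap measurable_id)
      rwa [Measure.map_id] at this
    rw [h1, h2]
    rfl
  -- G
  set G : ℝ × ℝ × ℝ → ℝ × ℝ × ℝ := fun p =>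
    (p.2.2 + p.2.1⁻¹, (p.2.2 * p.2.1 + 1) / p.1, p.1 * p.2.1 * p.2.2 / (p.2.2 * p.2.1 + 1))
    with hG
  have hGmeas : Measurable G := by
    apply Measurable.prod
    · exact (measurable_snd.comp measurable_snd).add (measurable_fst.comp measurable_snd).inv
    · apply Measurable.prod
      · exact (((measurable_snd.comp measurable_snd).mul
          (measurable_fst.comp measurable_snd)).add measurable_const).div measurable_fst
      · exact ((measurable_fst.mul (measurable_fst.comp measurable_snd)).mul
          (measurable_snd.comp measurable_snd)).div
            (((measurable_snd.comp measurable_snd).mul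
              (measurable_fst.comp measurable_snd)).add measurable_const)
  -- a.e. equality of G ∘ φ and φ ∘ Shat
  have hnull : ν Omega0ᶜ = 0 := nu_compl_Omega0 hβ hk hr
  have haeΩ : ∀ᵐ p ∂ν, p ∈ Omega0 := by
    rw [ae_iff]
    exact hnull
  have heq : ∀ p ∈ Omega0, (G ∘ φ) p = (φ ∘ Shat) p := by
    rintro ⟨u, w, y⟩ ⟨hu, hw, hy⟩
    have hs : (0:ℝ) < w + y := by linarith
    simp only [Function.comp_apply, hφ, hG, Shat]
    refine Prod.ext ?_ (Prod.ext ?_ ?_)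
    · simp [inv_inv]; ring
    · field_simp
      ring
    · rw [inv_div]
      field_simp
      ring
  have hae : (G ∘ φ) =ᵐ[ν] (φ ∘ Shat) := haeΩ.mono fun p hp => heq p hp
  -- chain
  calc P.map (fun ω =>
        (Y ω + (V ω)⁻¹, (Y ω * V ω + 1) / U ω, U ω * V ω * Y ω / (Y ω * V ω + 1)))
      = (P.map (fun ω => (U ω, V ω, Y ω))).map G := by
        rw [Measure.map_map hGmeas (hUmeas.prodMk (hVmeas.prodMk hYmeas))]
        rfl
    _ = (ν.map φ).map G := by rw [hjoint, hκ]
    _ = ν.map (G ∘ φ) := Measure.map_map hGmeas hφmeas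
    _ = ν.map (φ ∘ Shat) := Measure.map_congr hae
    _ = (ν.map Shat).map φ := (Measure.map_map hφmeas measurable_Shat).symm
    _ = ν.map φ := by rw [core_invariance hβ hk hr]
    _ = P.map (fun ω => (U ω, V ω, Y ω)) := by rw [hjoint, hκ]
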